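/- Correctness of the varying-cardinality search: max over all candidates V (of any cardinality n ∈ [1,M]) of sim(A, V) equals the maximum over n ∈ [1,M] and pairs (i,j) ∈ [1,|A|]×[1,n] of the best dot product τ_{i,j}^n · L_V^{|A|} over candidates V of cardinality n, and a candidate achieving this maximum is optimal. -/

import Mathlib

open scoped BigOperators

noncomputable def cosSim {D : ℕ} (a b : EuclideanSpace ℝ (Fin D)) : ℝ :=
  (inner ℝ a b : ℝ) / (‖a‖ * ‖b‖)

noncomputable def avgSim {D m n : ℕ} (A : Fin m → EuclideanSpace ℝ (Fin D))
    (V : Fin n → EuclideanSpace ℝ (Fin D)) : ℝ :=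
  (∑ i, ∑ j, cosSim (A i) (V j)) / ((m : ℝ) * (n : ℝ))

noncomputable def maxSim {D m n : ℕ} (A : Fin m → EuclideanSpace ℝ (Fin D))
    (V : Fin n → EuclideanSpace ℝ (Fin D)) : ℝ :=
  ⨆ p : Fin m × Fin n, cosSim (A p.1) (V p.2)

noncomputable def simSet {D m n : ℕ} (wmax wavg : ℝ) (A : Fin m → EuclideanSpace ℝ (Fin D))
    (V : Fin n → EuclideanSpace ℝ (Fin D)) : ℝ :=
  (wmax * maxSim A V + wavg * avgSim A V) / (wmax + wavg)

noncomputable def fpair {D m n : ℕ} (wmax wavg : ℝ) (A : Fin m → EuclideanSpace ℝ (Fin D))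
    (V : Fin n → EuclideanSpace ℝ (Fin D)) (i : Fin m) (j : Fin n) : ℝ :=
  (wmax * cosSim (A i) (V j) + wavg * avgSim A V) / (wmax + wavg)

lemma fpair_le_simSet {D m n : ℕ} [Nonempty (Fin m)] [Nonempty (Fin n)]
    {wmax wavg : ℝ} (hw1 : 0 < wmax) (hw2 : 0 < wavg)
    (A : Fin m → EuclideanSpace ℝ (Fin D)) (V : Fin n → EuclideanSpace ℝ (Fin D))
    (i : Fin m) (j : Fin n) :
    fpair wmax wavg A V i j ≤ simSet wmax wavg A V := by
  unfold fpair simSet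
  have h : cosSim (A i) (V j) ≤ maxSim A V :=
    le_ciSup (Set.Finite.bddAbove (Set.finite_range
      (fun p : Fin m × Fin n => cosSim (A p.1) (V p.2)))) (i, j)
  gcongr

lemma exists_fpair_eq_simSet {D m n : ℕ} [Nonempty (Fin m)] [Nonempty (Fin n)]
    (wmax wavg : ℝ)
    (A : Fin m → EuclideanSpace ℝ (Fin D)) (V : Fin n → EuclideanSpace ℝ (Fin D)) :
    ∃ i j, fpair wmax wavg A V i j = simSet wmax wavg A V := by
  obtain ⟨p, hp⟩ := exists_eq_ciSup_of_finite
    (f := fun p : Fin m × Fin n => cosSim (A p.1) (V p.2))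
  exact ⟨p.1, p.2, by unfold fpair simSet maxSim; rw [hp]⟩

theorem stmt13 (D M m : ℕ) (hm : 0 < m) (hM : 1 ≤ M)
    (A : Fin m → EuclideanSpace ℝ (Fin D)) (hA : ∀ i, A i ≠ 0)
    (wmax wavg : ℝ) (hw1 : 0 < wmax) (hw2 : 0 < wavg)
    (C : (n : ℕ) → Finset (Fin n → EuclideanSpace ℝ (Fin D)))
    (hCne : ∃ n ∈ Finset.Icc 1 M, (C n).Nonempty)
    (hCz : ∀ n : ℕ, ∀ V ∈ C n, ∀ j, V j ≠ 0) :
    sSup {x : ℝ | ∃ n ∈ Finset.Icc 1 M, ∃ V ∈ C n, x = simSet wmax wavg A V}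
      = sSup {x : ℝ | ∃ n ∈ Finset.Icc 1 M, (C n).Nonempty ∧ ∃ i : Fin m, ∃ j : Fin n,
          x = sSup {y : ℝ | ∃ V ∈ C n, y = fpair wmax wavg A V i j}} ∧
    ∀ n₀ ∈ Finset.Icc 1 M, ∀ V₀ ∈ C n₀, ∀ i₀ : Fin m, ∀ j₀ : Fin n₀,
      fpair wmax wavg A V₀ i₀ j₀
          = sSup {x : ℝ | ∃ n ∈ Finset.Icc 1 M, (C n).Nonempty ∧ ∃ i : Fin m, ∃ j : Fin n,
              x = sSup {y : ℝ | ∃ V ∈ C n, y = fpair wmax wavg A V i j}} →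
      ∀ n ∈ Finset.Icc 1 M, ∀ V ∈ C n,
        simSet wmax wavg A V ≤ simSet wmax wavg A V₀ := by
  haveI : Nonempty (Fin m) := Fin.pos_iff_nonempty.mp hm
  set S1 := {x : ℝ | ∃ n ∈ Finset.Icc 1 M, ∃ V ∈ C n, x = simSet wmax wavg A V} with hS1def
  set S2 := {x : ℝ | ∃ n ∈ Finset.Icc 1 M, (C n).Nonempty ∧ ∃ i : Fin m, ∃ j : Fin n,
      x = sSup {y : ℝ | ∃ V ∈ C n, y = fpair wmax wavg A V i j}} with hS2def
  -- finiteness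
  have hS1fin : S1.Finite := by
    apply Set.Finite.subset (Set.Finite.biUnion (Finset.Icc 1 M).finite_toSet
      (fun n _ => ((C n).finite_toSet.image (fun V => simSet wmax wavg A V))))
    rintro x ⟨n, hn, V, hV, rfl⟩
    exact Set.mem_biUnion hn ⟨V, hV, rfl⟩
  have hS2fin : S2.Finite := by
    apply Set.Finite.subset (Set.Finite.biUnion (Finset.Icc 1 M).finite_toSet
      (fun n _ => Set.finite_range (fun p : Fin m × Fin n =>
        sSup {y : ℝ | ∃ V ∈ C n, y = fpair wmax wavg A V p.1 p.2})))
    rintro x ⟨n, hn, -, i, j, rfl⟩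
    exact Set.mem_biUnion hn ⟨(i, j), rfl⟩
  have hTfin : ∀ (n : ℕ) (i : Fin m) (j : Fin n),
      ({y : ℝ | ∃ V ∈ C n, y = fpair wmax wavg A V i j}).Finite := by
    intro n i j
    apply Set.Finite.subset ((C n).finite_toSet.image (fun V => fpair wmax wavg A V i j))
    rintro y ⟨V, hV, rfl⟩
    exact ⟨V, hV, rfl⟩
  obtain ⟨n₁, hn₁, V₁, hV₁⟩ := hCne
  have hS1ne : S1.Nonempty := ⟨simSet wmax wavg A V₁, n₁, hn₁, V₁, hV₁, rfl⟩
  have hS2ne : S2.Nonempty := by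
    haveI : Nonempty (Fin n₁) := Fin.pos_iff_nonempty.mp (Finset.mem_Icc.mp hn₁).1
    exact ⟨_, n₁, hn₁, ⟨V₁, hV₁⟩, Classical.arbitrary _, Classical.arbitrary _, rfl⟩
  -- every element of S1 is ≤ sSup S2
  have h1 : ∀ x ∈ S1, x ≤ sSup S2 := by
    rintro x ⟨n, hn, V, hV, rfl⟩
    haveI : Nonempty (Fin n) := Fin.pos_iff_nonempty.mp (Finset.mem_Icc.mp hn).1
    obtain ⟨i, j, hij⟩ := exists_fpair_eq_simSet wmax wavg A V
    calc simSet wmax wavg A V = fpair wmax wavg A V i j := hij.symm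
      _ ≤ sSup {y : ℝ | ∃ V ∈ C n, y = fpair wmax wavg A V i j} :=
          le_csSup (hTfin n i j).bddAbove ⟨V, hV, rfl⟩
      _ ≤ sSup S2 := le_csSup hS2fin.bddAbove ⟨n, hn, ⟨V, hV⟩, i, j, rfl⟩
  -- every element of S2 is ≤ sSup S1
  have h2 : ∀ x ∈ S2, x ≤ sSup S1 := by
    rintro x ⟨n, hn, ⟨W, hW⟩, i, j, rfl⟩
    haveI : Nonempty (Fin n) := Fin.pos_iff_nonempty.mp (Finset.mem_Icc.mp hn).1
    have hne : ({y : ℝ | ∃ V ∈ C n, y = fpair wmax wavg A V i j}).Nonempty :=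
      ⟨fpair wmax wavg A W i j, W, hW, rfl⟩
    apply csSup_le hne
    rintro y ⟨V, hV, rfl⟩
    calc fpair wmax wavg A V i j ≤ simSet wmax wavg A V := fpair_le_simSet hw1 hw2 A V i j
      _ ≤ sSup S1 := le_csSup hS1fin.bddAbove ⟨n, hn, V, hV, rfl⟩
  constructor
  · exact le_antisymm (csSup_le hS1ne h1) (csSup_le hS2ne h2)
  · intro n₀ hn₀ V₀ hV₀ i₀ j₀ heq n hn V hV
    haveI : Nonempty (Fin n₀) := Fin.pos_iff_nonempty.mp (Finset.mem_Icc.mp hn₀).1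
    calc simSet wmax wavg A V ≤ sSup S2 := h1 _ ⟨n, hn, V, hV, rfl⟩
      _ = fpair wmax wavg A V₀ i₀ j₀ := heq.symm
      _ ≤ simSet wmax wavg A V₀ := fpair_le_simSet hw1 hw2 A V₀ i₀ j₀
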